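/- Let q ≥ 1, 0 < β ≤ 2/3, n ≥ 2, and 1/2 < r ≤ (1/2)[n]_q^{1-β}. Then for all complex z with |z| ≤ r: |R_{n,q}(e_2; z) - z^2| ≤ (4q^2 r)^2·2/[n]_q^{β} + 2r·(2r)^2/[n]_q^{1-β}. (This is the m = 2 case of Theorem 2 of the paper.) -/

import Mathlib

/-- The real `q`-integer `[k]_q = 1 + q + ⋯ + q^{k-1}`. -/
noncomputable def qInt (q : ℝ) (k : ℕ) : ℝ := ∑ i ∈ Finset.range k, q ^ i

/-- The complex `q`-integer. -/
noncomputable def qIntC (q : ℝ) (k : ℕ) : ℂ := ∑ i ∈ Finset.range k, (q : ℂ) ^ i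

/-- The `q`-factorial `[n]_q!`. -/
noncomputable def qFactC (q : ℝ) (n : ℕ) : ℂ := ∏ i ∈ Finset.range n, qIntC q (i + 1)

/-- The `q`-binomial coefficient `[n choose k]_q`. -/
noncomputable def qBinomC (q : ℝ) (n k : ℕ) : ℂ :=
  qFactC q n / (qFactC q k * qFactC q (n - k))

/-- `a_n = [n]_q^{β-1}`. -/
noncomputable def balazsA (q β : ℝ) (n : ℕ) : ℝ := (qInt q n) ^ (β - 1)

/-- `b_n = [n]_q^{β}`. -/
noncomputable def balazsB (q β : ℝ) (n : ℕ) : ℝ := (qInt q n) ^ β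

/-- The complex `q`-Bernstein polynomial `B_{n,q}(g;w)`. -/
noncomputable def Bq (q : ℝ) (n : ℕ) (g : ℂ → ℂ) (w : ℂ) : ℂ :=
  ∑ k ∈ Finset.range (n + 1),
    g (qIntC q k / qIntC q n) * qBinomC q n k * w ^ k *
      ∏ s ∈ Finset.range (n - k), (1 - (q : ℂ) ^ s * w)

/-- The complex `q`-Balázs–Szabados operator `R_{n,q}(f;z)`. -/
noncomputable def Rq (q β : ℝ) (n : ℕ) (f : ℂ → ℂ) (z : ℂ) : ℂ :=
  ((1 + (balazsA q β n : ℂ) * z)⁻¹) ^ n *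
    ∑ k ∈ Finset.range (n + 1),
      f (qIntC q k / (balazsB q β n : ℂ)) * qBinomC q n k *
        ((balazsA q β n : ℂ) * z) ^ k *
        ∏ s ∈ Finset.range (n - k),
          (1 + (1 - (q : ℂ)) * qIntC q s * ((balazsA q β n : ℂ) * z))

section BalazsAux
open Finset
variable {q : ℝ}

noncomputable def Pq (q : ℝ) (t : ℂ) (j : ℕ) : ℂ :=
  ∏ s ∈ Finset.range j, (1 + (1 - (q:ℂ)^s) * t)

variable {q : ℝ}

lemma qIntC_eq (q : ℝ) (k : ℕ) : qIntC q k = ((qInt q k : ℝ) : ℂ) := by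
  simp [qIntC, qInt]

lemma one_le_qInt (hq : 1 ≤ q) (k : ℕ) : 1 ≤ qInt q (k+1) := by
  have h0 : ∀ i ∈ range (k+1), (0:ℝ) ≤ q ^ i := fun i _ => pow_nonneg (by linarith) i
  have := Finset.single_le_sum h0 (Finset.mem_range.2 (Nat.succ_pos k))
  simpa [qInt] using this

lemma qInt_pos (hq : 1 ≤ q) (k : ℕ) : 0 < qInt q (k+1) := lt_of_lt_of_le one_pos (one_le_qInt hq k)

lemma qIntC_ne (hq : 1 ≤ q) (k : ℕ) : qIntC q (k+1) ≠ 0 := by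
  rw [qIntC_eq]
  exact_mod_cast (qInt_pos hq k).ne'

lemma qFactC_zero (q : ℝ) : qFactC q 0 = 1 := by simp [qFactC]

lemma qFactC_succ (q : ℝ) (n : ℕ) : qFactC q (n+1) = qFactC q n * qIntC q (n+1) := by
  simp [qFactC, Finset.prod_range_succ]

lemma qFactC_ne (hq : 1 ≤ q) (n : ℕ) : qFactC q n ≠ 0 := by
  refine Finset.prod_ne_zero_iff.2 fun i _ => qIntC_ne hq i

lemma qBinomC_self (hq : 1 ≤ q) (n : ℕ) : qBinomC q n n = 1 := by
  rw [qBinomC, Nat.sub_self, qFactC_zero, mul_one, div_self (qFactC_ne hq n)]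

lemma qBinomC_zero (hq : 1 ≤ q) (n : ℕ) : qBinomC q n 0 = 1 := by
  simp [qBinomC, qFactC_zero, div_self (qFactC_ne hq n)]

lemma qIntC_add (q : ℝ) (a b : ℕ) : qIntC q (a+b) = qIntC q a + (q:ℂ)^a * qIntC q b := by
  simp only [qIntC, Finset.sum_range_add, pow_add, Finset.mul_sum]

lemma qIntC_succ' (q : ℝ) (b : ℕ) : qIntC q (b+1) = 1 + (q:ℂ) * qIntC q b := by
  have := qIntC_add q 1 b
  rw [Nat.add_comm 1 b] at this
  simpa [qIntC] using this

lemma pascal (hq : 1 ≤ q) (i d : ℕ) :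
    qBinomC q (i+d+2) (i+1) =
      (q:ℂ)^(d+1) * qBinomC q (i+d+1) i + qBinomC q (i+d+1) (i+1) := by
  have h1 : i+d+2-(i+1) = d+1 := by omega
  have h2 : i+d+1-i = d+1 := by omega
  have h3 : i+d+1-(i+1) = d := by omega
  rw [qBinomC, qBinomC, qBinomC, h1, h2, h3]
  have e1 : qFactC q (i+d+2) = qFactC q (i+d+1) * qIntC q (i+d+2) := qFactC_succ q (i+d+1)
  have e2 : qFactC q (i+1) = qFactC q i * qIntC q (i+1) := qFactC_succ q i
  have e3 : qFactC q (d+1) = qFactC q d * qIntC q (d+1) := qFactC_succ q d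
  have e4 : qIntC q (i+d+2) = qIntC q (d+1) + (q:ℂ)^(d+1) * qIntC q (i+1) := by
    rw [show i+d+2 = (d+1)+(i+1) from by omega]; exact qIntC_add q (d+1) (i+1)
  rw [e1, e2, e3, e4]
  field_simp [qFactC_ne hq, qIntC_ne hq]
  ring

lemma Pq_succ (q : ℝ) (t : ℂ) (j : ℕ) :
    Pq q t (j+1) = Pq q t j * (1 + (1 - (q:ℂ)^j) * t) := by
  simp [Pq, Finset.prod_range_succ]

lemma Tsum (hq : 1 ≤ q) (t : ℂ) :
    ∀ m, ∑ j ∈ range (m+1), qBinomC q m j * t^j * Pq q t (m-j) = (1+t)^m := by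
  intro m
  induction m with
  | zero => simp [qBinomC_self hq, Pq]
  | succ m ih =>
    set H : ℕ → ℂ := fun j => (q:ℂ)^(m-j) * qBinomC q m j * t^(j+1) * Pq q t (m-j) with hH
    have key : ∑ j ∈ range (m+1),
        (qBinomC q (m+1) j * t^j * Pq q t (m+1-j)
          - (1+t) * (qBinomC q m j * t^j * Pq q t (m-j))) = - t^(m+1) := by
      rw [Finset.sum_range_succ' _ m]
      have e0 : qBinomC q (m+1) 0 * t^0 * Pq q t (m+1-0)
          - (1+t) * (qBinomC q m 0 * t^0 * Pq q t (m-0)) = - H 0 := by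
        simp only [pow_zero, mul_one, Nat.sub_zero, one_mul, qBinomC_zero hq]
        rw [Pq_succ, hH]
        simp only [Nat.sub_zero, qBinomC_zero hq]
        ring
      have es : ∀ i ∈ range m,
          (qBinomC q (m+1) (i+1) * t^(i+1) * Pq q t (m+1-(i+1))
            - (1+t) * (qBinomC q m (i+1) * t^(i+1) * Pq q t (m-(i+1))))
          = H i - H (i+1) := by
        intro i hi
        obtain ⟨d, rfl⟩ : ∃ d, m = i + d + 1 := ⟨m - i - 1, by
          have := Finset.mem_range.1 hi; omega⟩
        have h1 : i+d+1+1-(i+1) = d+1 := by omega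
        have h2 : i+d+1-(i+1) = d := by omega
        have h3 : i+d+1-i = d+1 := by omega
        rw [show i+d+1+1 = i+d+2 from rfl, h1, h2, hH]
        simp only [h2, h3]
        rw [pascal hq i d, Pq_succ]
        ring
      rw [Finset.sum_congr rfl es, Finset.sum_range_sub' H m, e0, hH]
      simp only [Nat.sub_self, qBinomC_self hq]
      have : Pq q t 0 = 1 := by simp [Pq]
      rw [this]
      ring
    have split := Finset.sum_sub_distrib (s := range (m+1))
      (f := fun j => qBinomC q (m+1) j * t^j * Pq q t (m+1-j))
      (g := fun j => (1+t) * (qBinomC q m j * t^j * Pq q t (m-j)))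
    rw [split] at key
    rw [← Finset.mul_sum, ih] at key
    have top : ∑ j ∈ range (m+2), qBinomC q (m+1) j * t^j * Pq q t (m+1-j)
        = (∑ j ∈ range (m+1), qBinomC q (m+1) j * t^j * Pq q t (m+1-j)) + t^(m+1) := by
      rw [Finset.sum_range_succ]
      simp [qBinomC_self hq, Pq]
    rw [top, pow_succ]
    linear_combination key

lemma qmul (hq : 1 ≤ q) (j d : ℕ) :
    qIntC q (j+1) * qBinomC q (j+1+d) (j+1) = qIntC q (j+1+d) * qBinomC q (j+d) j := by
  have h1 : j+1+d-(j+1) = d := by omega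
  have h2 : j+d-j = d := by omega
  rw [qBinomC, qBinomC, h1, h2]
  have e1 : qFactC q (j+1+d) = qFactC q (j+d) * qIntC q (j+1+d) := by
    rw [show j+1+d = (j+d)+1 from by omega]; exact qFactC_succ q (j+d)
  have e2 : qFactC q (j+1) = qFactC q j * qIntC q (j+1) := qFactC_succ q j
  rw [e1, e2]
  field_simp [qFactC_ne hq, qIntC_ne hq]

lemma M1 (hq : 1 ≤ q) (t : ℂ) (m : ℕ) :
    ∑ j ∈ range (m+2), qIntC q j * (qBinomC q (m+1) j * t^j * Pq q t (m+1-j))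
      = qIntC q (m+1) * t * (1+t)^m := by
  rw [Finset.sum_range_succ' _ (m+1)]
  have h0 : qIntC q 0 = 0 := by simp [qIntC]
  rw [h0]
  have es : ∀ i ∈ range (m+1),
      qIntC q (i+1) * (qBinomC q (m+1) (i+1) * t^(i+1) * Pq q t (m+1-(i+1)))
      = qIntC q (m+1) * t * (qBinomC q m i * t^i * Pq q t (m-i)) := by
    intro i hi
    obtain ⟨d, rfl⟩ : ∃ d, m = i + d := ⟨m - i, by have := Finset.mem_range.1 hi; omega⟩
    have h1 : i+d+1-(i+1) = d := by omega
    have h2 : i+d-i = d := by omega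
    rw [h1, h2, show i+d+1 = i+1+d from by omega]
    rw [← mul_assoc, ← mul_assoc, qmul hq i d]
    ring
  rw [Finset.sum_congr rfl es, ← Finset.mul_sum, Tsum hq t m]
  ring

lemma M2 (hq : 1 ≤ q) (t : ℂ) (m : ℕ) :
    ∑ j ∈ range (m+3), qIntC q j^2 * (qBinomC q (m+2) j * t^j * Pq q t (m+2-j))
      = qIntC q (m+2) * t * (1+t)^(m+1)
        + (q:ℂ) * qIntC q (m+2) * qIntC q (m+1) * t^2 * (1+t)^m := by
  rw [Finset.sum_range_succ' _ (m+2)]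
  have h0 : qIntC q 0 = 0 := by simp [qIntC]
  rw [h0]
  have es : ∀ i ∈ range (m+2),
      qIntC q (i+1)^2 * (qBinomC q (m+2) (i+1) * t^(i+1) * Pq q t (m+2-(i+1)))
      = qIntC q (m+2) * t * (qBinomC q (m+1) i * t^i * Pq q t (m+1-i))
        + (q:ℂ) * qIntC q (m+2) * t
            * (qIntC q i * (qBinomC q (m+1) i * t^i * Pq q t (m+1-i))) := by
    intro i hi
    obtain ⟨d, hd⟩ : ∃ d, m+1 = i + d := ⟨m+1 - i, by have := Finset.mem_range.1 hi; omega⟩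
    rw [show m+2 = i+1+d from by omega, hd]
    have key : qIntC q (i+1) * qBinomC q (i+1+d) (i+1) = qIntC q (i+1+d) * qBinomC q (i+d) i :=
      qmul hq i d
    have hsucc : qIntC q (i+1) = 1 + (q:ℂ) * qIntC q i := qIntC_succ' q i
    rw [show i+1+d-(i+1) = d from by omega, show i+d-i = d from by omega, sq]
    calc qIntC q (i+1) * qIntC q (i+1) * (qBinomC q (i+1+d) (i+1) * t^(i+1) * Pq q t d)
        = (qIntC q (i+1) * qBinomC q (i+1+d) (i+1)) * (qIntC q (i+1) * t^(i+1) * Pq q t d) := by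
          ring
      _ = (qIntC q (i+1+d) * qBinomC q (i+d) i)
            * ((1 + (q:ℂ) * qIntC q i) * t^(i+1) * Pq q t d) := by rw [key, hsucc]
      _ = _ := by rw [show i+d = i+1+d-1 from by omega]; ring
  rw [Finset.sum_congr rfl es, Finset.sum_add_distrib, ← Finset.mul_sum, ← Finset.mul_sum]
  rw [Tsum hq t (m+1), M1 hq t m]
  ring





lemma one_sub_mul' (q : ℝ) (s : ℕ) : (1 - (q:ℂ)) * qIntC q s = 1 - (q:ℂ)^s := by
  have h := geom_sum_mul (q:ℂ) s
  simp only [qIntC]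
  linear_combination -h

lemma Rq_e2 (hq : 1 ≤ q) (β : ℝ) (m : ℕ) (z : ℂ)
    (ht : (1:ℂ) + (balazsA q β (m+2) : ℂ) * z ≠ 0) :
    Rq q β (m+2) (fun w => w^2) z =
      (qIntC q (m+2)^2 * ((balazsA q β (m+2) : ℂ) * z)^2 + qIntC q (m+2) * ((balazsA q β (m+2) : ℂ) * z))
        / (((balazsB q β (m+2) : ℝ) : ℂ)^2 * (1 + (balazsA q β (m+2) : ℂ) * z)^2) := by
  set t : ℂ := (balazsA q β (m+2) : ℂ) * z with htdef
  set b : ℂ := ((balazsB q β (m+2) : ℝ) : ℂ) with hbdef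
  have hN : 0 < qInt q (m+2) := by
    have := qInt_pos hq (m+1); rwa [show (m+1)+1 = m+2 from rfl] at this
  have hb : b ≠ 0 := by
    rw [hbdef]
    exact_mod_cast (Real.rpow_pos_of_pos hN β).ne'
  have hsum : ∑ k ∈ Finset.range (m+2+1),
      (fun w => w^2) (qIntC q k / b) * qBinomC q (m+2) k * t^k *
        ∏ s ∈ Finset.range (m+2-k), (1 + (1 - (q:ℂ)) * qIntC q s * t)
      = (b^2)⁻¹ * ∑ j ∈ range (m+3), qIntC q j^2 * (qBinomC q (m+2) j * t^j * Pq q t (m+2-j)) := by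
    rw [Finset.mul_sum]
    refine Finset.sum_congr rfl fun k _ => ?_
    have hP : ∏ s ∈ Finset.range (m+2-k), (1 + (1 - (q:ℂ)) * qIntC q s * t)
        = Pq q t (m+2-k) := by
      refine Finset.prod_congr rfl fun s _ => ?_
      rw [mul_assoc, ← mul_assoc (1 - (q:ℂ)), one_sub_mul']
    rw [hP]
    field_simp
  rw [Rq, hsum, M2 hq t m]
  have hq2 : qIntC q (m+2) = 1 + (q:ℂ) * qIntC q (m+1) := qIntC_succ' q (m+1)
  rw [inv_pow]
  rw [hq2]
  have hX : ((1+t)^(m+2))⁻¹ * (1+t)^(m+2) = 1 := inv_mul_cancel₀ (pow_ne_zero _ ht)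
  have hB2 : (b^2)⁻¹ * b^2 = 1 := inv_mul_cancel₀ (pow_ne_zero _ hb)
  rw [eq_div_iff (mul_ne_zero (pow_ne_zero 2 hb) (pow_ne_zero 2 ht))]
  linear_combination ((1 + (q:ℂ) * qIntC q (m+1)) * t + (1 + (q:ℂ) * qIntC q (m+1))^2 * t^2)
    * ((1+t)^(m+2))⁻¹ * (1+t)^(m+2) * hB2
    + ((1 + (q:ℂ) * qIntC q (m+1)) * t + (1 + (q:ℂ) * qIntC q (m+1))^2 * t^2) * hX

end BalazsAux

set_option maxHeartbeats 1600000 in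
theorem balazs_e2_estimate (q β : ℝ) (hq : 1 ≤ q) (hβ0 : 0 < β) (hβ : β ≤ 2 / 3)
    (n : ℕ) (hn : 2 ≤ n) (r : ℝ) (hr0 : 1 / 2 < r)
    (hr : r ≤ (1 / 2) * (qInt q n) ^ (1 - β)) (z : ℂ) (hz : ‖z‖ ≤ r) :
    ‖Rq q β n (fun w => w ^ 2) z - z ^ 2‖ ≤
      (4 * q ^ 2 * r) ^ 2 * 2 / (qInt q n) ^ β + 2 * r * (2 * r) ^ 2 / (qInt q n) ^ (1 - β) := by
  obtain ⟨m, rfl⟩ : ∃ m, n = m + 2 := ⟨n - 2, by omega⟩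
  set N : ℝ := qInt q (m+2) with hNdef
  have hN : 0 < N := qInt_pos hq (m+1)
  set A : ℝ := balazsA q β (m+2) with hAdef
  set B : ℝ := balazsB q β (m+2) with hBdef
  have hA : 0 < A := Real.rpow_pos_of_pos hN _
  have hB : 0 < B := Real.rpow_pos_of_pos hN _
  have hNb : 0 < N ^ β := Real.rpow_pos_of_pos hN _
  have hN1b : 0 < N ^ (1-β) := Real.rpow_pos_of_pos hN _
  have key1 : A * N ^ (1-β) = 1 := by
    rw [hAdef, balazsA, ← hNdef, ← Real.rpow_add hN, show β - 1 + (1-β) = 0 by ring,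
      Real.rpow_zero]
  have keyB : N * A = B := by
    rw [hAdef, hBdef, balazsA, balazsB, ← hNdef]
    nth_rewrite 1 [show N = N ^ (1:ℝ) by rw [Real.rpow_one]]
    rw [← Real.rpow_add hN]; norm_num
  set t : ℂ := (A : ℂ) * z with htdef
  have habs_t : ‖t‖ = A * ‖z‖ := by
    rw [htdef, norm_mul, Complex.norm_real, Real.norm_eq_abs, abs_of_pos hA]
  have ht2 : ‖t‖ ≤ 1/2 := by
    rw [habs_t]
    calc A * ‖z‖ ≤ A * ((1/2) * N ^ (1-β)) := by
          apply mul_le_mul_of_nonneg_left (le_trans hz hr) hA.le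
      _ = (1/2) * (A * N ^ (1-β)) := by ring
      _ = 1/2 := by rw [key1]; norm_num
  have h1t : 1/2 ≤ ‖1 + t‖ := by
    have h := norm_add_le (1 + t) (-t)
    simp only [add_neg_cancel_right, norm_neg] at h
    have : ‖(1:ℂ)‖ = 1 := by simp
    rw [this] at h
    linarith
  have ht0 : (1:ℂ) + t ≠ 0 := by
    intro h; rw [h] at h1t; simp at h1t; linarith
  -- closed form
  have hcf := Rq_e2 hq β m z (by rwa [← hAdef, ← htdef])
  rw [← hAdef, ← hBdef, ← htdef, qIntC_eq, ← hNdef] at hcf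
  -- rewrite as z^2 + c z over (1+t)^2
  set c : ℝ := (N ^ β)⁻¹ with hcdef
  have hc : 0 < c := by positivity
  have hcB : c * B ^ 2 = B := by
    rw [hcdef, hBdef, balazsB, ← hNdef, sq]
    field_simp
  have hE : ((N:ℂ))^2 * t^2 + (N:ℂ) * t = ((z^2 + (c:ℝ) * z) * (B:ℂ)^2 : ℂ) := by
    have keyBc : (N:ℂ) * (A:ℂ) = (B:ℂ) := by exact_mod_cast keyB
    have hcBc : (c:ℝ) * (B:ℝ)^2 = B := hcB
    have hcBc' : ((c:ℝ):ℂ) * ((B:ℝ):ℂ)^2 = ((B:ℝ):ℂ) := by exact_mod_cast hcBc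
    rw [htdef]
    linear_combination (((N:ℂ)*(A:ℂ)+((B:ℝ):ℂ))*z^2 + z)*keyBc - z*hcBc'
  have hBc : ((B:ℝ):ℂ) ≠ 0 := by exact_mod_cast hB.ne'
  have hcf2 : Rq q β (m+2) (fun w => w^2) z = (z^2 + (c:ℝ) * z) / (1+t)^2 := by
    rw [hcf, hE, mul_comm ((z^2 + ((c:ℝ):ℂ) * z)) (((B:ℝ):ℂ)^2),
      mul_div_mul_left _ _ (pow_ne_zero 2 hBc)]
  -- decompose
  set u : ℂ := t * (1+t)⁻¹ with hudef
  have hdecomp : Rq q β (m+2) (fun w => w^2) z - z^2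
      = z^2 * (u^2 - 2*u) + (c:ℝ) * z * ((1+t)⁻¹)^2 := by
    rw [hcf2, hudef]
    field_simp
    ring
  have habs_u : ‖u‖ ≤ 2 * ‖t‖ := by
    rw [hudef, norm_mul, norm_inv]
    have h2 : (‖1+t‖)⁻¹ ≤ 2 := by
      rw [inv_le_comm₀ (by linarith) (by norm_num)]
      linarith
    nlinarith [norm_nonneg t]
  have habs_u1 : ‖u‖ ≤ 1 := le_trans habs_u (by linarith)
  clear_value u
  have hinv : ‖(1+t)⁻¹‖ ≤ 2 := by
    rw [norm_inv, inv_le_comm₀ (by linarith) (by norm_num)]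
    linarith
  have hr0' : (0:ℝ) < r := by linarith
  have hzr : ‖z‖ ≤ r := hz
  have bound : ‖Rq q β (m+2) (fun w => w^2) z - z^2‖
      ≤ r^2 * (6 * (A * r)) + c * r * 4 := by
    rw [hdecomp]
    calc ‖z^2 * (u^2 - 2*u) + (c:ℝ) * z * ((1+t)⁻¹)^2‖
        ≤ ‖z^2 * (u^2 - 2*u)‖ + ‖(c:ℝ) * z * ((1+t)⁻¹)^2‖ :=
          norm_add_le _ _
      _ = ‖z‖^2 * ‖u^2 - 2*u‖
            + c * ‖z‖ * ‖(1+t)⁻¹‖^2 := by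
          rw [norm_mul, norm_mul, norm_mul, norm_pow, norm_pow, Complex.norm_real, Real.norm_eq_abs, abs_of_pos hc]
      _ ≤ r^2 * (6 * (A * r)) + c * r * 4 := by
          have h1 : ‖u^2 - 2*u‖ ≤ 6 * (A * r) := by
            have hadd := norm_add_le (u^2) (-(2*u))
            rw [norm_neg] at hadd
            have e1' : ‖u^2‖ = ‖u‖^2 := norm_pow u 2
            have e2' : ‖2*u‖ = 2 * ‖u‖ := by
              rw [norm_mul, Complex.norm_two]
            rw [e1', e2'] at hadd
            have hstep : ‖u^2 - 2*u‖ ≤ 3 * ‖u‖ := by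
              rw [sub_eq_add_neg]
              nlinarith [norm_nonneg u, habs_u1]
            have hAt : ‖t‖ ≤ A * r := by
              rw [habs_t]
              nlinarith [norm_nonneg z, hA.le]
            linarith
          have h2 : ‖(1+t)⁻¹‖^2 ≤ 4 := by nlinarith [norm_nonneg ((1+t)⁻¹)]
          have habsz2 : ‖z‖^2 ≤ r^2 := by nlinarith [norm_nonneg z]
          have t1 : ‖z‖^2 * ‖u^2-2*u‖ ≤ r^2 * (6 * (A*r)) := by
            apply mul_le_mul habsz2 h1 (norm_nonneg _) (by positivity)
          have t2 : c * ‖z‖ * ‖(1+t)⁻¹‖^2 ≤ c * r * 4 := by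
            apply mul_le_mul (mul_le_mul_of_nonneg_left hzr hc.le) h2 (by positivity) (by positivity)
          linarith
  refine le_trans bound ?_
  -- final arithmetic
  have hAinv : A = (N ^ (1-β))⁻¹ := by
    field_simp
    linarith [key1]
  rw [hAinv, hcdef]
  rw [div_eq_mul_inv, div_eq_mul_inv]
  have e1 : r^2 * (6 * ((N^(1-β))⁻¹ * r)) ≤ 2*r*(2*r)^2 * (N^(1-β))⁻¹ := by
    have : r^2 * (6 * r) ≤ 2*r*(2*r)^2 := by nlinarith
    have hpos : (0:ℝ) ≤ (N^(1-β))⁻¹ := by positivity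
    nlinarith
  have e2 : (N^β)⁻¹ * r * 4 ≤ (4*q^2*r)^2 * 2 * (N^β)⁻¹ := by
    have hq2 : 1 ≤ q^2 := by nlinarith [sq_nonneg (q-1)]
    have hq4 : 1 ≤ q^2*q^2 := by nlinarith [hq2]
    have h1' : r * 4 ≤ 32*(r*r) := by nlinarith
    have h2' : 32*(r*r) ≤ (4*q^2*r)^2 * 2 := by nlinarith [mul_pos hr0' hr0']
    have hpos : (0:ℝ) ≤ (N^β)⁻¹ := by positivity
    nlinarith
  linarith
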